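/- Let (X_1,...,X_k, Y_1,...,Y_k, Z_1,...,Z_k) satisfy: (X's) ⫫ (Z's) | (Y's). If S_Z is conditionally independent of (Y_1,...,Y_k) given S_Y, then S_X ⫫ S_Z | S_Y. -/

import Mathlib

open MeasureTheory ProbabilityTheory

lemma indicator_one_integrable {Ω : Type*} [mΩ : MeasurableSpace Ω] (μ : Measure Ω)
    [IsFiniteMeasure μ] {B : Set Ω} (hB : MeasurableSet B) :
    Integrable (B.indicator fun _ => (1:ℝ)) μ :=
  (integrable_const 1).indicator hB

section Aux
variable {Ω : Type*} [mΩ : MeasurableSpace Ω] {μ : Measure Ω} [IsProbabilityMeasure μ]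

lemma norm_condexp_indicator_le_one {m : MeasurableSpace Ω} (hm : m ≤ mΩ)
    {B : Set Ω} (hB : MeasurableSet[mΩ] B) :
    ∀ᵐ ω ∂μ, ‖(μ⟦B|m⟧) ω‖ ≤ 1 := by
  letI : MeasurableSpace Ω := mΩ
  have h0 : (0 : Ω → ℝ) ≤ᵐ[μ] μ⟦B|m⟧ :=
    condExp_nonneg (Filter.Eventually.of_forall fun ω =>
      Set.indicator_nonneg (fun _ _ => zero_le_one) ω)
  have h1 : μ⟦B|m⟧ ≤ᵐ[μ] μ[(fun _ => (1:ℝ))|m] :=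
    condExp_mono (indicator_one_integrable (mΩ := mΩ) μ hB) (integrable_const 1)
      (Filter.Eventually.of_forall (Set.indicator_le_self' (fun _ _ => zero_le_one)))
  rw [condExp_const hm] at h1
  filter_upwards [h0, h1] with ω hω0 hω1
  rw [Real.norm_eq_abs, abs_of_nonneg hω0]
  exact hω1

variable [StandardBorelSpace Ω]

/-- If `g ⫫ w | m₁` with `m₁ ≤ σ(w)`, then `E[1_{g⁻¹ t} | σ(w)] = E[1_{g⁻¹ t} | m₁]`. -/
lemma condexp_comap_eq_of_condIndepFun {β γ : Type*} [mβ : MeasurableSpace β]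
    [mγ : MeasurableSpace γ] {g : Ω → β} {w : Ω → γ}
    (hg : Measurable g) (hw : Measurable w)
    {m₁ : MeasurableSpace Ω} {hm₁ : m₁ ≤ mΩ}
    (h12 : m₁ ≤ MeasurableSpace.comap w mγ)
    (h2 : CondIndepFun m₁ hm₁ g w μ)
    {t : Set β} (ht : MeasurableSet t) :
    (μ⟦g ⁻¹' t | MeasurableSpace.comap w mγ⟧) =ᵐ[μ] μ⟦g ⁻¹' t | m₁⟧ := by
  letI : MeasurableSpace Ω := mΩ
  set B : Set Ω := g ⁻¹' t with hBdef
  have hB : MeasurableSet[mΩ] B := hg ht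
  have hBint : Integrable (B.indicator fun _ => (1:ℝ)) μ := indicator_one_integrable (mΩ := mΩ) μ hB
  have hprod := (condIndepFun_iff_condExp_inter_preimage_eq_mul (μ := μ) (hm' := hm₁) hg hw).mp h2
  refine (ae_eq_condExp_of_forall_setIntegral_eq hw.comap_le hBint
    (fun s _ _ => integrable_condExp.integrableOn) ?_
    (stronglyMeasurable_condExp.aestronglyMeasurable.mono h12)).symm
  · rintro s ⟨C, hC, rfl⟩ -
    set sC : Set Ω := w ⁻¹' C with hsCdef
    have hsC : MeasurableSet[mΩ] sC := hw hC
    have hsCint : Integrable (sC.indicator fun _ => (1:ℝ)) μ := indicator_one_integrable (mΩ := mΩ) μ hsC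
    set c : Ω → ℝ := μ⟦B|m₁⟧ with hcdef
    have hc_meas : AEStronglyMeasurable c μ :=
      (stronglyMeasurable_condExp.mono hm₁).aestronglyMeasurable
    have hc_bdd : ∀ᵐ ω ∂μ, ‖c ω‖ ≤ 1 := norm_condexp_indicator_le_one (mΩ := mΩ) hm₁ hB
    have hcs_int : Integrable (c * sC.indicator fun _ => (1:ℝ)) μ :=
      hsCint.bdd_mul hc_meas hc_bdd
    have step1 : ∫ x in sC, c x ∂μ = ∫ x, (c * sC.indicator fun _ => (1:ℝ)) x ∂μ := by
      rw [← integral_indicator (μ := μ) hsC]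
      congr 1
      ext x
      classical
      by_cases hx : x ∈ sC <;> simp [Set.indicator_apply, hx]
    have step3 : (μ[(c * sC.indicator fun _ => (1:ℝ))|m₁]) =ᵐ[μ] c * μ⟦sC|m₁⟧ :=
      condExp_stronglyMeasurable_mul_of_bound₀ hm₁
        stronglyMeasurable_condExp.aestronglyMeasurable hsCint 1 hc_bdd
    have hBs : MeasurableSet[mΩ] (B ∩ sC) := hB.inter hsC
    have hBsint : Integrable ((B ∩ sC).indicator fun _ => (1:ℝ)) μ :=
      indicator_one_integrable (mΩ := mΩ) μ hBs
    have rhs1 : ∫ x in sC, B.indicator (fun _ => (1:ℝ)) x ∂μ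
        = ∫ x, (B ∩ sC).indicator (fun _ => (1:ℝ)) x ∂μ := by
      rw [← integral_indicator (μ := μ) hsC]
      congr 1
      ext x
      classical
      by_cases hx1 : x ∈ B <;> by_cases hx2 : x ∈ sC <;>
        simp [Set.indicator_apply, hx1, hx2]
    calc ∫ x in sC, c x ∂μ
        = ∫ x, (c * sC.indicator fun _ => (1:ℝ)) x ∂μ := step1
      _ = ∫ x, (μ[(c * sC.indicator fun _ => (1:ℝ))|m₁]) x ∂μ := (integral_condExp hm₁).symm
      _ = ∫ x, (c * μ⟦sC|m₁⟧) x ∂μ := integral_congr_ae step3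
      _ = ∫ x, (μ⟦B ∩ sC|m₁⟧) x ∂μ := by
          refine (integral_congr_ae ?_).symm
          refine (hprod t C ht hC).trans ?_
          rfl
      _ = ∫ x, (B ∩ sC).indicator (fun _ => (1:ℝ)) x ∂μ := integral_condExp hm₁
      _ = ∫ x in sC, B.indicator (fun _ => (1:ℝ)) x ∂μ := rhs1.symm

/-- Main auxiliary lemma: if `f ⫫ g | σ(w)` and `g ⫫ w | m₁` with `m₁ ≤ σ(w)`,
then `f ⫫ g | m₁`. -/
lemma condIndepFun_of_condIndepFun_comap {β γ δ : Type*} [mβ : MeasurableSpace β]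
    [mγ : MeasurableSpace γ] [mδ : MeasurableSpace δ]
    {f : Ω → β} {g : Ω → γ} {w : Ω → δ}
    (hf : Measurable f) (hg : Measurable g) (hw : Measurable w)
    {m₁ : MeasurableSpace Ω} {hm₁ : m₁ ≤ mΩ}
    (h12 : m₁ ≤ MeasurableSpace.comap w mδ)
    (h1 : CondIndepFun (MeasurableSpace.comap w mδ) hw.comap_le f g μ)
    (h2 : CondIndepFun m₁ hm₁ g w μ) :
    CondIndepFun m₁ hm₁ f g μ := by
  set mW := MeasurableSpace.comap w mδ with hmWdef
  letI : MeasurableSpace Ω := mΩ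
  have hmW : mW ≤ mΩ := hw.comap_le
  rw [condIndepFun_iff_condExp_inter_preimage_eq_mul hf hg]
  intro s t hs ht
  have hAB := (condIndepFun_iff_condExp_inter_preimage_eq_mul (μ := μ)
    (hm' := hw.comap_le) hf hg).mp h1 s t hs ht
  have key : (μ⟦g ⁻¹' t | mW⟧) =ᵐ[μ] μ⟦g ⁻¹' t | m₁⟧ :=
    condexp_comap_eq_of_condIndepFun (mΩ := mΩ) hg hw h12 h2 ht
  set A : Set Ω := f ⁻¹' s with hAdef
  set B : Set Ω := g ⁻¹' t with hBdef
  have hA : MeasurableSet[mΩ] A := hf hs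
  have hB : MeasurableSet[mΩ] B := hg ht
  have hb_meas : AEStronglyMeasurable[m₁] (μ⟦B|m₁⟧) μ :=
    stronglyMeasurable_condExp.aestronglyMeasurable
  have hb_bdd : ∀ᵐ ω ∂μ, ‖(μ⟦B|m₁⟧) ω‖ ≤ 1 := norm_condexp_indicator_le_one (mΩ := mΩ) hm₁ hB
  have hpull : (μ[(μ⟦B|m₁⟧ * μ⟦A|mW⟧)|m₁]) =ᵐ[μ] μ⟦B|m₁⟧ * μ[(μ⟦A|mW⟧)|m₁] :=
    condExp_stronglyMeasurable_mul_of_bound₀ hm₁ hb_meas integrable_condExp 1 hb_bdd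
  have htower : (μ[(μ⟦A|mW⟧)|m₁]) =ᵐ[μ] μ⟦A|m₁⟧ := condExp_condExp_of_le h12 hmW
  calc (μ⟦A ∩ B|m₁⟧)
      =ᵐ[μ] μ[(μ⟦A ∩ B|mW⟧)|m₁] := (condExp_condExp_of_le h12 hmW).symm
    _ =ᵐ[μ] μ[(μ⟦A|mW⟧ * μ⟦B|mW⟧)|m₁] := condExp_congr_ae hAB
    _ =ᵐ[μ] μ[(μ⟦B|m₁⟧ * μ⟦A|mW⟧)|m₁] := by
        refine condExp_congr_ae ?_
        filter_upwards [key] with ω hω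
        simp only [Pi.mul_apply]
        rw [hω, mul_comm]
    _ =ᵐ[μ] μ⟦B|m₁⟧ * μ[(μ⟦A|mW⟧)|m₁] := hpull
    _ =ᵐ[μ] fun ω => (μ⟦A|m₁⟧) ω * (μ⟦B|m₁⟧) ω := by
        filter_upwards [htower] with ω hω
        simp only [Pi.mul_apply]
        rw [hω, mul_comm]

end Aux

theorem stmt9 {Ω : Type*} [MeasurableSpace Ω] [StandardBorelSpace Ω] [Nonempty Ω]
    (μ : Measure Ω) [IsProbabilityMeasure μ] (k : ℕ) (X Y Z : Fin k → Ω → ℝ)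
    (hX : ∀ i, Measurable (X i)) (hY : ∀ i, Measurable (Y i)) (hZ : ∀ i, Measurable (Z i))
    (h1 : CondIndepFun
      (MeasurableSpace.comap (fun ω => (fun i => Y i ω)) MeasurableSpace.pi)
      (Measurable.comap_le (measurable_pi_iff.mpr hY))
      (fun ω => (fun i => X i ω)) (fun ω => (fun i => Z i ω)) μ)
    (h2 : CondIndepFun
      (MeasurableSpace.comap (fun ω => ∑ i, Y i ω) Real.measurableSpace)
      (Measurable.comap_le (Finset.measurable_sum Finset.univ (fun i _ => hY i)))
      (fun ω => ∑ i, Z i ω) (fun ω => (fun i => Y i ω)) μ) :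
    CondIndepFun
      (MeasurableSpace.comap (fun ω => ∑ i, Y i ω) Real.measurableSpace)
      (Measurable.comap_le (Finset.measurable_sum Finset.univ (fun i _ => hY i)))
      (fun ω => ∑ i, X i ω) (fun ω => ∑ i, Z i ω) μ := by
  have hsum : Measurable (fun v : Fin k → ℝ => ∑ i, v i) :=
    Finset.measurable_sum Finset.univ (fun i _ => measurable_pi_apply i)
  have hYv : Measurable (fun ω => (fun i => Y i ω)) := measurable_pi_iff.mpr hY
  have hSX : Measurable (fun ω => ∑ i, X i ω) :=
    Finset.measurable_sum Finset.univ (fun i _ => hX i)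
  have hSZ : Measurable (fun ω => ∑ i, Z i ω) :=
    Finset.measurable_sum Finset.univ (fun i _ => hZ i)
  have h12 : MeasurableSpace.comap (fun ω => ∑ i, Y i ω) Real.measurableSpace
      ≤ MeasurableSpace.comap (fun ω => (fun i => Y i ω)) MeasurableSpace.pi := by
    have : (fun ω => ∑ i, Y i ω)
        = (fun v : Fin k → ℝ => ∑ i, v i) ∘ (fun ω => (fun i => Y i ω)) := rfl
    rw [this, ← MeasurableSpace.comap_comp]
    exact MeasurableSpace.comap_mono hsum.comap_le
  have h1' : CondIndepFun
      (MeasurableSpace.comap (fun ω => (fun i => Y i ω)) MeasurableSpace.pi)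
      hYv.comap_le (fun ω => ∑ i, X i ω) (fun ω => ∑ i, Z i ω) μ :=
    h1.comp hsum hsum
  exact condIndepFun_of_condIndepFun_comap hSX hSZ hYv h12 h1' h2
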